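/- Let X be a Tychonoff space, λ a bornology on X with a closed base, and (Y,ρ) a metric space. If X is functionally generated with respect to Y by the family σλ, then C_{λ,ρ}(X,Y) is a μ-space. -/

import Mathlib

set_option maxHeartbeats 2000000

open Filter Topology Set
open scoped Uniformity

universe u v

/-- A subset is (topologically) bounded if every continuous real-valued function
on the space is bounded on it. -/
def IsTopBounded {X : Type u} [TopologicalSpace X] (A : Set X) : Prop :=
  ∀ f : X → ℝ, Continuous f → ∃ M : ℝ, ∀ x ∈ A, |f x| ≤ M

/-- A μ-space: every topologically bounded subset has compact closure. -/
def MuSpace (X : Type u) [TopologicalSpace X] : Prop :=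
  ∀ A : Set X, IsTopBounded A → IsCompact (closure A)

/-- A bornology (family of nonempty sets covering X, closed under finite unions and
nonempty subsets) which is moreover closed under taking closures (has a closed base). -/
def IsBornologyWithClosedBase {X : Type u} [TopologicalSpace X] (L : Set (Set X)) : Prop :=
  (∀ A ∈ L, A.Nonempty) ∧ (⋃₀ L = univ) ∧ (∀ A ∈ L, ∀ B ∈ L, A ∪ B ∈ L) ∧
    (∀ A ∈ L, ∀ B : Set X, B.Nonempty → B ⊆ A → B ∈ L) ∧ (∀ A ∈ L, closure A ∈ L)

/-- X is functionally generated by the family μ with respect to Y if for every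
discontinuous f : X → Y there is A ∈ μ such that f|A extends to no continuous map X → Y. -/
def FunctionallyGenerated (X : Type u) [TopologicalSpace X] (μ : Set (Set X))
    (Y : Type v) [TopologicalSpace Y] : Prop :=
  ∀ f : X → Y, ¬ Continuous f →
    ∃ A ∈ μ, ¬ ∃ g : X → Y, Continuous g ∧ ∀ x ∈ A, g x = f x

/-- σλ: the family of countable unions of members of L. -/
def sigmaFam {X : Type u} (L : Set (Set X)) : Set (Set X) :=
  {B | ∃ S : ℕ → Set X, (∀ n, S n ∈ L) ∧ B = ⋃ n, S n}

/-- C_{λ,ρ}(X,Y): the continuous maps from X to the metric space Y, carrying the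
uniformity (hence topology) of uniform convergence on members of L. -/
def CL (X : Type u) [TopologicalSpace X] (Y : Type v) [MetricSpace Y]
    (L : Set (Set X)) : Type (max u v) := C(X, Y)

noncomputable instance CL.instUniformSpace (X : Type u) [TopologicalSpace X] (Y : Type v)
    [MetricSpace Y] (L : Set (Set X)) : UniformSpace (CL X Y L) :=
  UniformSpace.comap (fun f => UniformOnFun.ofFun L (⇑(show C(X,Y) from f)))
    (UniformOnFun.uniformSpace X Y L)


lemma isCompact_closure_of_forall_bounded {Y : Type v} [MetricSpace Y] {S : Set Y}
    (hb : ∀ h : Y → ℝ, Continuous h → ∃ M, ∀ y ∈ S, |h y| ≤ M) :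
    IsCompact (closure S) := by
  by_contra hc
  have hsc : ¬ IsSeqCompact (closure S) := fun h => hc h.isCompact
  rw [IsSeqCompact] at hsc
  push_neg at hsc
  obtain ⟨u, hu, hnosub⟩ := hsc
  -- no subsequence of u converges at all
  have hnc : ∀ φ : ℕ → ℕ, StrictMono φ → ∀ z : Y, ¬ Tendsto (u ∘ φ) atTop (𝓝 z) := by
    intro φ hφ z htend
    have hz : z ∈ closure S :=
      isClosed_closure.mem_of_tendsto htend (Eventually.of_forall fun n => hu _)
    exact hnosub z hz φ hφ htend
  -- every point has an isolating radius for range u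
  have hiso : ∀ z : Y, ∃ r > 0, ∀ y ∈ range u, y ∈ Metric.ball z r → y = z := by
    intro z
    by_contra hz
    push_neg at hz
    -- arbitrarily close distinct points
    have hclose : ∀ δ > 0, ∃ m, 0 < dist (u m) z ∧ dist (u m) z < δ := by
      intro δ hδ
      obtain ⟨y, hy, hball, hne⟩ := hz δ hδ
      obtain ⟨m, rfl⟩ := hy
      exact ⟨m, dist_pos.2 hne, by simpa [Metric.mem_ball] using hball⟩
    have hSr : ∀ r > 0, {m | 0 < dist (u m) z ∧ dist (u m) z < r}.Infinite := by
      intro r hr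
      by_contra hfin
      rw [Set.not_infinite] at hfin
      have hne0 : {m | 0 < dist (u m) z ∧ dist (u m) z < r}.Nonempty := by
        obtain ⟨m, hm1, hm2⟩ := hclose r hr
        exact ⟨m, hm1, hm2⟩
      have hFne : hfin.toFinset.Nonempty := by
        rwa [Set.Finite.toFinset_nonempty]
      set δ := hfin.toFinset.inf' hFne (fun m => dist (u m) z) with hδdef
      have hδpos : 0 < δ := by
        rw [Finset.lt_inf'_iff]
        intro m hm
        exact ((hfin.mem_toFinset.1 hm)).1
      obtain ⟨k, hk⟩ := exists_nat_gt (1/δ)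
      have hkpos : (0:ℝ) < 1/(k+1) := by positivity
      obtain ⟨m, hm1, hm2⟩ := hclose (min r (1/(k+1))) (lt_min hr hkpos)
      have hmem : m ∈ hfin.toFinset := hfin.mem_toFinset.2 ⟨hm1, hm2.trans_le (min_le_left _ _)⟩
      have : δ ≤ dist (u m) z := Finset.inf'_le _ hmem
      have h1 : dist (u m) z < 1/(k+1) := hm2.trans_le (min_le_right _ _)
      have h2 : 1/(k+1) < δ := by
        rw [div_lt_iff₀ (by positivity)]
        rw [div_lt_iff₀ hδpos] at hk
        nlinarith [hδpos]
      linarith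
    -- build a convergent subsequence by recursion
    have hstep : ∀ (k n : ℕ), ∃ m, n < m ∧ 0 < dist (u m) z ∧ dist (u m) z < 1/(k+1) := by
      intro k n
      obtain ⟨m, hm, hlt⟩ := (hSr (1/(k+1)) (by positivity)).exists_gt n
      exact ⟨m, hlt, hm⟩
    choose! f hf1 hf2 hf3 using hstep
    obtain ⟨m0, hm01, hm02⟩ := hclose 1 one_pos
    set φ : ℕ → ℕ := fun k => Nat.rec m0 (fun k ih => f (k+1) ih) k with hφdef
    have hφsucc : ∀ k, φ (k+1) = f (k+1) (φ k) := fun k => rfl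
    have hφmono : StrictMono φ := strictMono_nat_of_lt_succ (by
      intro k; rw [hφsucc]; exact hf1 (k+1) (φ k))
    have hφdist : ∀ k, dist (u (φ k)) z < 1/(k+1) := by
      intro k
      cases k with
      | zero => have h0 : φ 0 = m0 := rfl; rw [h0]; simpa using hm02
      | succ k => rw [hφsucc]; exact_mod_cast hf3 (k+1) (φ k)
    have : Tendsto (u ∘ φ) atTop (𝓝 z) := by
      rw [Metric.tendsto_atTop]
      intro ε hε
      obtain ⟨N, hN⟩ := exists_nat_gt (1/ε)
      refine ⟨N, fun k hk => ?_⟩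
      have h1 : dist (u (φ k)) z < 1/(k+1) := hφdist k
      have h2 : (1:ℝ)/(k+1) ≤ 1/(N+1) := by
        apply one_div_le_one_div_of_le (by positivity)
        exact_mod_cast Nat.succ_le_succ hk
      have h3 : (1:ℝ)/(N+1) < ε := by
        rw [div_lt_iff₀ (by positivity)]
        rw [div_lt_iff₀ hε] at hN
        nlinarith
      calc dist ((u ∘ φ) k) z < 1/(k+1) := h1
        _ ≤ 1/(N+1) := h2
        _ < ε := h3
    exact hnc φ hφmono z this
  choose r hrpos hriso using hiso
  -- fibers of u are finite
  have hfib : ∀ n : ℕ, {m | u m = u n}.Finite := by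
    intro n
    by_contra hinf
    obtain ⟨φ, hφmono, hφP⟩ := extraction_of_frequently_atTop
      (Nat.frequently_atTop_iff_infinite.2 hinf)
    refine hnc φ hφmono (u n) ?_
    have : (u ∘ φ) = fun _ => u n := funext fun k => hφP k
    rw [this]
    exact tendsto_const_nhds
  -- range u is closed
  have hDclosed : IsClosed (range u) := by
    apply isClosed_of_closure_subset
    intro z hz
    rw [Metric.mem_closure_iff] at hz
    obtain ⟨y, hy, hdy⟩ := hz (r z) (hrpos z)
    have : y = z := hriso z y hy (by rwa [Metric.mem_ball, dist_comm])
    rwa [← this]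
  have hDdisc : DiscreteTopology (range u) := by
    rw [discreteTopology_iff_isOpen_singleton]
    intro y
    have : {y} = (Subtype.val : range u → Y) ⁻¹' (Metric.ball (y : Y) (r y)) := by
      ext w
      simp only [mem_singleton_iff, mem_preimage, Metric.mem_ball]
      constructor
      · rintro rfl; simpa using hrpos (w:Y)
      · intro hw
        have := hriso (y : Y) (w : Y) w.2 (by rwa [Metric.mem_ball])
        exact Subtype.ext this
    rw [this]
    exact (Metric.isOpen_ball).preimage continuous_subtype_val
  -- the unbounded function on range u
  set f0 : range u → ℝ := fun y => ((sSup {m | u m = (y : Y)} : ℕ) : ℝ) with hf0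
  have hf0ge : ∀ n : ℕ, (n : ℝ) ≤ f0 ⟨u n, mem_range_self n⟩ := by
    intro n
    have : n ≤ sSup {m | u m = u n} := le_csSup (hfib n).bddAbove rfl
    show (n:ℝ) ≤ ((sSup {m | u m = u n} : ℕ) : ℝ)
    exact_mod_cast this
  obtain ⟨g, hg⟩ := ContinuousMap.exists_restrict_eq hDclosed
    (⟨f0, continuous_of_discreteTopology⟩ : C(range u, ℝ))
  obtain ⟨M, hM⟩ := hb g g.continuous
  obtain ⟨n, hn⟩ := exists_nat_gt M
  have hgn : g (u n) = f0 ⟨u n, mem_range_self n⟩ := by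
    have := congrFun (congrArg DFunLike.coe hg) ⟨u n, mem_range_self n⟩
    simpa using this
  have hgnbig : M < |g (u n)| := by
    rw [hgn]
    have h1 := hf0ge n
    have : M < f0 ⟨u n, mem_range_self n⟩ := lt_of_lt_of_le hn h1
    exact lt_of_lt_of_le this (le_abs_self _)
  -- transfer to S
  have hUopen : IsOpen {w : Y | M < |g w|} :=
    isOpen_lt continuous_const (continuous_abs.comp g.continuous)
  have hmem : u n ∈ {w : Y | M < |g w|} := hgnbig
  obtain ⟨y, hyU, hyS⟩ := _root_.mem_closure_iff.1 (hu n) _ hUopen hmem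
  exact absurd (hM y hyS) (not_le.2 hyU)

namespace CLAux

variable {X : Type u} [TopologicalSpace X] {Y : Type v} [MetricSpace Y] {L : Set (Set X)}

/-- the underlying function -/
def toF (f : CL X Y L) : X → Y := ⇑(show C(X,Y) from f)

lemma uc_toUOF : UniformContinuous
    (fun f : CL X Y L => UniformOnFun.ofFun L (toF f)) :=
  uniformContinuous_comap

/-- basic entourages -/
def ent (L : Set (Set X)) (B : Set X) (δ : ℝ) : Set (CL X Y L × CL X Y L) :=
  {p | ∀ x ∈ B, dist (toF p.1 x) (toF p.2 x) < δ}

lemma ent_symm {B : Set X} {δ : ℝ} {p : CL X Y L × CL X Y L}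
    (h : p ∈ ent L B δ) : (p.2, p.1) ∈ ent L B δ := by
  intro x hx
  rw [dist_comm]
  exact h x hx

lemma ent_mem {B : Set X} {δ : ℝ} (hB : B ∈ L) (hδ : 0 < δ) :
    ent L B δ ∈ 𝓤 (CL X Y L) := by
  have hgen : UniformOnFun.gen L B {p : Y × Y | dist p.1 p.2 < δ}
      ∈ 𝓤 (UniformOnFun X Y L) :=
    UniformOnFun.gen_mem_uniformity _ _ hB (Metric.dist_mem_uniformity hδ)
  have : ent L B δ = (fun p : CL X Y L × CL X Y L =>
      (UniformOnFun.ofFun L (toF p.1), UniformOnFun.ofFun L (toF p.2))) ⁻¹'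
      UniformOnFun.gen L B {p : Y × Y | dist p.1 p.2 < δ} := rfl
  have h2 : 𝓤 (CL X Y L) = Filter.comap (fun p : CL X Y L × CL X Y L =>
      (UniformOnFun.ofFun L (toF p.1), UniformOnFun.ofFun L (toF p.2)))
      (𝓤 (UniformOnFun X Y L)) := rfl
  rw [this, h2]
  exact Filter.preimage_mem_comap hgen

lemma exists_ent_subset (hne : L.Nonempty) (hdir : DirectedOn (· ⊆ ·) L)
    {V : Set (CL X Y L × CL X Y L)} (hV : V ∈ 𝓤 (CL X Y L)) :
    ∃ B ∈ L, ∃ δ > 0, ent L B δ ⊆ V := by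
  have h2 : 𝓤 (CL X Y L) = Filter.comap (fun p : CL X Y L × CL X Y L =>
      (UniformOnFun.ofFun L (toF p.1), UniformOnFun.ofFun L (toF p.2)))
      (𝓤 (UniformOnFun X Y L)) := rfl
  rw [h2, Filter.mem_comap] at hV
  obtain ⟨W, hW, hWV⟩ := hV
  obtain ⟨⟨B, δ⟩, ⟨hB, hδ⟩, hsub⟩ :=
    (UniformOnFun.hasBasis_uniformity_of_basis X Y L hne hdir
      Metric.uniformity_basis_dist).mem_iff.1 hW
  refine ⟨B, hB, δ, hδ, ?_⟩
  intro p hp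
  apply hWV
  apply mem_preimage.2
  apply hsub
  exact fun x hx => hp x hx

variable {B : Set X} {c r : ℝ} {f g h : X → Y}

/-- capped sup pseudometric -/
noncomputable def supd (B : Set X) (c : ℝ) (f g : X → Y) : ℝ :=
  sSup ((fun x => min c (dist (f x) (g x))) '' B)

lemma supd_bddAbove (hc : 0 ≤ c) :
    BddAbove ((fun x => min c (dist (f x) (g x))) '' B) :=
  ⟨c, by rintro y ⟨x, hx, rfl⟩; exact min_le_left _ _⟩

lemma le_supd (hc : 0 ≤ c) {x : X} (hx : x ∈ B) :
    min c (dist (f x) (g x)) ≤ supd B c f g :=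
  le_csSup (supd_bddAbove hc) ⟨x, hx, rfl⟩

lemma supd_nonneg (hc : 0 ≤ c) : 0 ≤ supd B c f g := by
  rcases B.eq_empty_or_nonempty with rfl | ⟨x, hx⟩
  · simp [supd, Real.sSup_empty]
  · exact le_trans (le_min hc dist_nonneg) (le_supd hc hx)

lemma supd_le (h1 : ∀ x ∈ B, min c (dist (f x) (g x)) ≤ r) (hr : 0 ≤ r) :
    supd B c f g ≤ r :=
  Real.sSup_le (by rintro y ⟨x, hx, rfl⟩; exact h1 x hx) hr

lemma supd_le_c (hc : 0 ≤ c) : supd B c f g ≤ c :=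
  supd_le (fun x _ => min_le_left _ _) hc

lemma supd_comm : supd B c f g = supd B c g f := by
  simp only [supd, dist_comm]

lemma min_add_min {a b d : ℝ} (hc : 0 ≤ c) (ha : 0 ≤ a) (hb : 0 ≤ b)
    (hd : d ≤ a + b) : min c d ≤ min c a + min c b := by
  rcases le_or_gt c a with h | h
  · have : min c a = c := min_eq_left h
    rw [this]
    have : min c b ≥ 0 := le_min hc hb
    have : min c d ≤ c := min_le_left _ _
    linarith [le_min hc hb]
  · rcases le_or_gt c b with h' | h'
    · have : min c b = c := min_eq_left h'
      rw [this]
      linarith [min_le_left c d, le_min hc ha]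
    · rw [min_eq_right h.le, min_eq_right h'.le]
      exact le_trans (min_le_right _ _) hd

lemma supd_triangle (hc : 0 ≤ c) :
    supd B c f h ≤ supd B c f g + supd B c g h := by
  apply supd_le (fun x hx => ?_)
    (add_nonneg (supd_nonneg hc) (supd_nonneg hc))
  calc min c (dist (f x) (h x))
      ≤ min c (dist (f x) (g x)) + min c (dist (g x) (h x)) :=
        min_add_min hc dist_nonneg dist_nonneg (dist_triangle _ _ _)
    _ ≤ supd B c f g + supd B c g h :=
        add_le_add (le_supd hc hx) (le_supd hc hx)

lemma supd_mono_set {B' : Set X} (hc : 0 ≤ c) (hBB : B' ⊆ B) :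
    supd B' c f g ≤ supd B c f g :=
  supd_le (fun x hx => le_supd hc (hBB hx)) (supd_nonneg hc)

lemma abs_supd_sub_le {f' : X → Y} (hc : 0 ≤ c) :
    |supd B c f g - supd B c f' g| ≤ supd B c f f' := by
  rw [abs_sub_le_iff]
  constructor
  · have := supd_triangle (B := B) (f := f) (g := f') (h := g) hc
    linarith [this, supd_comm (B := B) (c := c) (f := f) (g := f')]
  · have := supd_triangle (B := B) (f := f') (g := f) (h := g) hc
    linarith [supd_comm (B := B) (c := c) (f := f') (g := f)]

/-- if all distances on `B` are `< δ ≤ anything`, `supd ≤ δ` -/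
lemma supd_le_of_forall_dist (hδ : 0 ≤ r) (h1 : ∀ x ∈ B, dist (f x) (g x) ≤ r) :
    supd B c f g ≤ r :=
  supd_le (fun x hx => le_trans (min_le_right _ _) (h1 x hx)) hδ

lemma cont_supd (hB : B ∈ L) (hc : 0 < c) (h : X → Y) :
    Continuous (fun f : CL X Y L => supd B c (toF f) h) := by
  rw [continuous_iff_continuousAt]
  intro f₀
  rw [ContinuousAt, Metric.tendsto_nhds]
  intro ε hε
  have hmem : UniformSpace.ball f₀ (ent L B (min (ε/2) c)) ∈ 𝓝 f₀ :=
    UniformSpace.ball_mem_nhds _ (ent_mem hB (lt_min (by positivity) hc))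
  filter_upwards [hmem] with f hf
  rw [Real.dist_eq]
  have key : supd B c (toF f) (toF f₀) ≤ ε/2 := by
    apply supd_le_of_forall_dist (by positivity)
    intro x hx
    have := hf x hx
    rw [dist_comm]
    exact le_trans this.le (min_le_left _ _)
  have := abs_supd_sub_le (B := B) (c := c) (f := toF f) (g := h) (f' := toF f₀) hc.le
  have h2 : |supd B c (toF f) h - supd B c (toF f₀) h| ≤ ε/2 := le_trans this key
  calc |supd B c (toF f) h - supd B c (toF f₀) h| ≤ ε/2 := h2
    _ < ε := by linarith

lemma totallyBounded_of_isTopBounded (hne : L.Nonempty) (hdir : DirectedOn (· ⊆ ·) L)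
    {A : Set (CL X Y L)} (hA : IsTopBounded A) : TotallyBounded A := by
  by_contra hTB
  rw [TotallyBounded] at hTB
  push_neg at hTB
  obtain ⟨d, hd, hct⟩ := hTB
  obtain ⟨B, hB, ε, hε, hsub⟩ := exists_ent_subset hne hdir hd
  -- we can always pick a point of `A` far from any finite set
  have key : ∀ s : Set (CL X Y L), s.Finite → ∃ a, a ∈ A ∧ ∀ y ∈ s, (a, y) ∉ ent L B ε := by
    intro s hs
    have := hct s hs
    rw [Set.not_subset] at this
    obtain ⟨a, haA, ha⟩ := this
    refine ⟨a, haA, fun y hy hmem => ha ?_⟩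
    simp only [mem_iUnion]
    exact ⟨y, hy, hsub hmem⟩
  choose F hFA using key
  -- recursively build a uniformly separated sequence in A
  set l : ℕ → List (CL X Y L) :=
    fun n => Nat.rec [] (fun _ ih => F {x | x ∈ ih} ih.finite_toSet :: ih) n with hl
  set u : ℕ → CL X Y L := fun n => F {x | x ∈ l n} (l n).finite_toSet with hu
  have hlfin : ∀ n, {x | x ∈ l n}.Finite := fun n => (l n).finite_toSet
  have hlsucc : ∀ n, l (n + 1) = u n :: l n := fun n => rfl
  have hlmono : ∀ n, ∀ x ∈ l n, x ∈ l (n + 1) := by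
    intro n x hx
    rw [hlsucc]
    exact List.mem_cons_of_mem _ hx
  have humem : ∀ k n, k < n → u k ∈ l n := by
    intro k n hkn
    induction n with
    | zero => omega
    | succ n ih =>
      rcases Nat.lt_succ_iff_lt_or_eq.1 hkn with h | h
      · exact hlmono n _ (ih h)
      · subst h
        rw [hlsucc]
        exact List.mem_cons_self
  have huA : ∀ n, u n ∈ A := fun n => (hFA _ (l n).finite_toSet).1
  have husep : ∀ n m, n ≠ m → (u n, u m) ∉ ent L B ε := by
    intro n m hnm
    rcases Nat.lt_or_ge m n with h | h
    · exact (hFA _ (l n).finite_toSet).2 _ (humem m n h)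
    · have hlt : n < m := lt_of_le_of_ne h hnm
      intro hmem
      exact (hFA _ (l m).finite_toSet).2 _ (humem n m hlt) (ent_symm hmem)
  -- the separated sequence has mutual supd-distance exactly ε
  set e : CL X Y L → ℕ → ℝ := fun f n => supd B ε (toF f) (toF (u n)) with he
  have hesep : ∀ n m, n ≠ m → ε ≤ e (u n) m := by
    intro n m hnm
    have := husep n m hnm
    rw [ent] at this
    simp only [mem_setOf_eq, not_forall, not_lt] at this
    obtain ⟨x, hx, hdist⟩ := this
    have : min ε (dist (toF (u n) x) (toF (u m) x)) = ε := min_eq_left hdist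
    calc ε = min ε (dist (toF (u n) x) (toF (u m) x)) := this.symm
      _ ≤ e (u n) m := le_supd hε.le hx
  have heself : ∀ n, e (u n) n = 0 := by
    intro n
    refine le_antisymm (supd_le (fun x _ => ?_) le_rfl) (supd_nonneg hε.le)
    simp
  -- the unbounded continuous function
  set T : ℕ → CL X Y L → ℝ :=
    fun n f => (n : ℝ) * max 0 (1 - 3/ε * e f n) with hT
  have hTcont : ∀ n, Continuous (T n) := by
    intro n
    have hec : Continuous (fun f : CL X Y L => e f n) := cont_supd hB hε (toF (u n))
    exact continuous_const.mul
      (continuous_const.max (continuous_const.sub (continuous_const.mul hec)))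
  have hT0 : ∀ n f, ε/3 ≤ e f n → T n f = 0 := by
    intro n f hef
    have : 1 - 3/ε * e f n ≤ 0 := by
      have h1 : 3/ε * (ε/3) ≤ 3/ε * e f n :=
        mul_le_mul_of_nonneg_left hef (by positivity)
      have h2 : 3/ε * (ε/3) = 1 := by field_simp
      linarith
    rw [hT]
    simp only [max_eq_left this]
    ring
  have hTnonneg : ∀ n f, 0 ≤ T n f :=
    fun n f => mul_nonneg (Nat.cast_nonneg n) (le_max_left _ _)
  have hTlt : ∀ n f, T n f ≠ 0 → e f n < ε/3 := by
    intro n f hTf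
    by_contra hcon
    exact hTf (hT0 n f (not_lt.1 hcon))
  -- locally at most one nonzero term
  have hlocal : ∀ f : CL X Y L, ∃ n₀, ∀ f' ∈ UniformSpace.ball f (ent L B (ε/12)),
      ∀ n ≠ n₀, T n f' = 0 := by
    intro f
    by_cases hex : ∃ n₁, ∃ f₁ ∈ UniformSpace.ball f (ent L B (ε/12)), T n₁ f₁ ≠ 0
    · obtain ⟨n₁, f₁, hf₁, hT₁⟩ := hex
      refine ⟨n₁, fun f' hf' n hn => ?_⟩
      by_contra hTn
      have h1 : e f' n < ε/3 := hTlt n f' hTn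
      have h2 : e f₁ n₁ < ε/3 := hTlt n₁ f₁ hT₁
      have h3 : supd B ε (toF f') (toF f₁) ≤ ε/6 := by
        have ha : supd B ε (toF f') (toF f) ≤ ε/12 := by
          apply supd_le_of_forall_dist (by positivity)
          intro x hx
          rw [dist_comm]
          exact (hf' x hx).le
        have hb : supd B ε (toF f) (toF f₁) ≤ ε/12 := by
          apply supd_le_of_forall_dist (by positivity)
          intro x hx
          exact (hf₁ x hx).le
        calc supd B ε (toF f') (toF f₁)
            ≤ supd B ε (toF f') (toF f) + supd B ε (toF f) (toF f₁) :=
              supd_triangle hε.le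
          _ ≤ ε/12 + ε/12 := add_le_add ha hb
          _ ≤ ε/6 := by linarith
      have h4 : ε ≤ supd B ε (toF (u n)) (toF (u n₁)) := hesep n n₁ hn
      have h5 : supd B ε (toF (u n)) (toF (u n₁))
          ≤ e f' n + supd B ε (toF f') (toF f₁) + e f₁ n₁ := by
        calc supd B ε (toF (u n)) (toF (u n₁))
            ≤ supd B ε (toF (u n)) (toF f') + supd B ε (toF f') (toF (u n₁)) :=
              supd_triangle hε.le
          _ ≤ supd B ε (toF (u n)) (toF f') + (supd B ε (toF f') (toF f₁)
              + supd B ε (toF f₁) (toF (u n₁))) :=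
              add_le_add le_rfl (supd_triangle hε.le)
          _ = e f' n + supd B ε (toF f') (toF f₁) + e f₁ n₁ := by
              rw [he]
              simp only []
              rw [supd_comm (f := toF (u n)) (g := toF f')]
              ring
      linarith
    · push_neg at hex
      exact ⟨0, fun f' hf' n _ => hex n f' hf'⟩
  set Φ : CL X Y L → ℝ := fun f => ∑' n, T n f with hΦ
  have hΦeval : ∀ f n₀, (∀ n ≠ n₀, T n f = 0) → Φ f = T n₀ f :=
    fun f n₀ hz => tsum_eq_single n₀ hz
  have hΦcont : Continuous Φ := by
    rw [continuous_iff_continuousAt]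
    intro f
    obtain ⟨n₀, hn₀⟩ := hlocal f
    have hmem : UniformSpace.ball f (ent L B (ε/12)) ∈ 𝓝 f :=
      UniformSpace.ball_mem_nhds _ (ent_mem hB (by positivity))
    apply (hTcont n₀).continuousAt.congr
    filter_upwards [hmem] with f' hf'
    exact (hΦeval f' n₀ (hn₀ f' hf')).symm
  have hΦval : ∀ k, Φ (u k) = k := by
    intro k
    have hz : ∀ n ≠ k, T n (u k) = 0 := by
      intro n hn
      apply hT0
      have : ε ≤ e (u k) n := hesep k n (Ne.symm hn)
      linarith
    rw [hΦeval (u k) k hz, hT]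
    simp only [heself k, mul_zero, sub_zero, max_eq_right zero_le_one, mul_one]
  obtain ⟨M, hM⟩ := hA Φ hΦcont
  obtain ⟨k, hk⟩ := exists_nat_gt M
  have := hM (u k) (huA k)
  rw [hΦval k] at this
  have : (k : ℝ) ≤ M := le_trans (le_abs_self _) this
  linarith

lemma uc_ev {x : X} (hx : {x} ∈ L) :
    UniformContinuous (fun f : CL X Y L => toF f x) :=
  (UniformOnFun.uniformContinuous_eval_of_mem Y L (mem_singleton x) hx).comp uc_toUOF

lemma isCompact_closure_image_eval {x : X} (hx : {x} ∈ L) {A : Set (CL X Y L)}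
    (hA : IsTopBounded A) :
    IsCompact (closure ((fun f : CL X Y L => toF f x) '' A)) := by
  apply isCompact_closure_of_forall_bounded
  intro h hc
  obtain ⟨M, hM⟩ := hA (fun f => h (toF f x)) (hc.comp (uc_ev hx).continuous)
  exact ⟨M, by rintro y ⟨f, hf, rfl⟩; exact hM f hf⟩

end CLAux


/-- If X is functionally generated with respect to Y by σλ, then C_{λ,ρ}(X,Y)
is a μ-space. -/
theorem muSpace_CL_of_functionallyGenerated (X : Type u) [TopologicalSpace X]
    [T35Space X] (Y : Type u) [MetricSpace Y] (L : Set (Set X))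
    (hL : IsBornologyWithClosedBase L)
    (hX : FunctionallyGenerated X (sigmaFam L) Y) :
    MuSpace (CL X Y L) := by
  intro A hA
  rcases isEmpty_or_nonempty X with hX0 | hX0
  · have hsub : (closure A).Subsingleton := by
      intro f _ g _
      have : (show C(X,Y) from f) = (show C(X,Y) from g) :=
        ContinuousMap.ext (fun x => (hX0.false x).elim)
      exact this
    exact hsub.finite.isCompact
  obtain ⟨hLnonE, hLcover, hLunion, hLhered, _⟩ := hL
  have hLne : L.Nonempty := by
    obtain ⟨x⟩ := hX0
    have : x ∈ ⋃₀ L := hLcover ▸ mem_univ x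
    obtain ⟨B, hB, _⟩ := this
    exact ⟨B, hB⟩
  have hdir : DirectedOn (· ⊆ ·) L := fun a ha b hb =>
    ⟨a ∪ b, hLunion a ha b hb, subset_union_left, subset_union_right⟩
  have hsingle : ∀ x : X, {x} ∈ L := by
    intro x
    have : x ∈ ⋃₀ L := hLcover ▸ mem_univ x
    obtain ⟨B, hB, hxB⟩ := this
    exact hLhered B hB {x} (singleton_nonempty x) (singleton_subset_iff.2 hxB)
  rw [isCompact_iff_totallyBounded_isComplete]
  refine ⟨(CLAux.totallyBounded_of_isTopBounded hLne hdir hA).closure, ?_⟩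
  intro Fl hFl hFle
  -- pointwise limits
  have hlim : ∀ x : X, ∃ y, Filter.map (fun f : CL X Y L => CLAux.toF f x) Fl ≤ 𝓝 y := by
    intro x
    have hptc := CLAux.isCompact_closure_image_eval (hsingle x) hA
    have hmapC : Cauchy (Filter.map (fun f : CL X Y L => CLAux.toF f x) Fl) :=
      hFl.map (CLAux.uc_ev (hsingle x))
    have hmaple : Filter.map (fun f : CL X Y L => CLAux.toF f x) Fl
        ≤ 𝓟 (closure ((fun f : CL X Y L => CLAux.toF f x) '' A)) := by
      rw [Filter.le_principal_iff, Filter.mem_map]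
      apply Filter.mem_of_superset (Filter.le_principal_iff.1 hFle)
      intro g hg
      simp only [mem_preimage]
      exact (image_closure_subset_closure_image
        (CLAux.uc_ev (hsingle x)).continuous) ⟨g, hg, rfl⟩
    obtain ⟨y, _, hy⟩ := hptc.isComplete _ hmapC hmaple
    exact ⟨y, hy⟩
  choose f₀ hf₀lim using hlim
  -- uniform estimate on members of L
  have hkey : ∀ B ∈ L, ∀ δ : ℝ, 0 < δ → ∃ M ∈ Fl, M ⊆ closure A ∧
      ∀ g ∈ M, ∀ x ∈ B, dist (CLAux.toF g x) (f₀ x) ≤ δ := by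
    intro B hB δ hδ
    have hent := hFl.2 (CLAux.ent_mem (Y := Y) hB (half_pos hδ))
    rw [Filter.mem_prod_iff] at hent
    obtain ⟨s, hs, t, ht, hst⟩ := hent
    refine ⟨s ∩ t ∩ closure A,
      Filter.inter_mem (Filter.inter_mem hs ht) (Filter.le_principal_iff.1 hFle),
      fun g hg => hg.2, ?_⟩
    rintro g ⟨⟨hgs, hgt⟩, -⟩ x hx
    have hball : (fun f : CL X Y L => CLAux.toF f x) ⁻¹' Metric.ball (f₀ x) (δ/2) ∈ Fl :=
      Filter.mem_map.1 (hf₀lim x (Metric.ball_mem_nhds _ (half_pos hδ)))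
    have hne2 : ((s ∩ t) ∩ ((fun f : CL X Y L => CLAux.toF f x) ⁻¹'
        Metric.ball (f₀ x) (δ/2))).Nonempty := by
      haveI := hFl.1
      exact Filter.nonempty_of_mem (Filter.inter_mem (Filter.inter_mem hs ht) hball)
    obtain ⟨g', ⟨hg's, hg't⟩, hg'ball⟩ := hne2
    have h1 : dist (CLAux.toF g x) (CLAux.toF g' x) < δ/2 :=
      hst (Set.mk_mem_prod hgs hg't) x hx
    have h2 : dist (CLAux.toF g' x) (f₀ x) < δ/2 := by
      simpa [Metric.mem_ball] using hg'ball
    calc dist (CLAux.toF g x) (f₀ x)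
        ≤ dist (CLAux.toF g x) (CLAux.toF g' x) + dist (CLAux.toF g' x) (f₀ x) :=
          dist_triangle _ _ _
      _ ≤ δ/2 + δ/2 := by linarith
      _ = δ := by ring
  -- continuity of the pointwise limit
  have hf₀cont : Continuous f₀ := by
    by_contra hdisc
    obtain ⟨S, hSσ, hnoext⟩ := hX f₀ hdisc
    obtain ⟨Bs, hBs, rfl⟩ := hSσ
    set ee : ℕ → CL X Y L → ℝ := fun k g => CLAux.supd (Bs k) 1 (CLAux.toF g) f₀ with hee
    have heecont : ∀ k, Continuous (ee k) := fun k => CLAux.cont_supd (hBs k) one_pos f₀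
    have heenonneg : ∀ k g, 0 ≤ ee k g := fun k g => CLAux.supd_nonneg zero_le_one
    have heele1 : ∀ k g, ee k g ≤ 1 := fun k g => CLAux.supd_le_c zero_le_one
    have hgeom : Summable (fun k : ℕ => (1/2 : ℝ)^k) :=
      summable_geometric_of_lt_one (by norm_num) (by norm_num)
    have hsummable : ∀ g, Summable (fun k => (1/2 : ℝ)^k * ee k g) := by
      intro g
      apply Summable.of_nonneg_of_le
        (fun k => mul_nonneg (by positivity) (heenonneg k g))
        (fun k => by
          calc (1/2 : ℝ)^k * ee k g ≤ (1/2)^k * 1 :=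
            mul_le_mul_of_nonneg_left (heele1 k g) (by positivity)
          _ = (1/2)^k := mul_one _) hgeom
    set Ψ : CL X Y L → ℝ := fun g => ∑' k, (1/2 : ℝ)^k * ee k g with hΨ
    have hΨcont : Continuous Ψ := by
      apply continuous_tsum (fun k => continuous_const.mul (heecont k)) hgeom
      intro k g
      show ‖(1/2 : ℝ)^k * ee k g‖ ≤ (1/2)^k
      rw [Real.norm_eq_abs, abs_of_nonneg (mul_nonneg (by positivity) (heenonneg k g))]
      calc (1/2 : ℝ)^k * ee k g ≤ (1/2)^k * 1 :=
        mul_le_mul_of_nonneg_left (heele1 k g) (by positivity)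
      _ = (1/2)^k := mul_one _
    have hΨnonneg : ∀ g, 0 ≤ Ψ g :=
      fun g => tsum_nonneg (fun k => mul_nonneg (by positivity) (heenonneg k g))
    have hΨpos : ∀ g, 0 < Ψ g := by
      intro g
      rcases lt_or_eq_of_le (hΨnonneg g) with h | h
      · exact h
      exfalso
      have hterm : ∀ k, (1/2 : ℝ)^k * ee k g = 0 := by
        intro k
        have hle : (1/2 : ℝ)^k * ee k g ≤ Ψ g :=
          Summable.le_tsum (hsummable g) k (fun j _ => mul_nonneg (by positivity) (heenonneg j g))
        rw [← h] at hle
        exact le_antisymm hle (mul_nonneg (by positivity) (heenonneg k g))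
      have hagree : ∀ x ∈ ⋃ n, Bs n, CLAux.toF g x = f₀ x := by
        rintro x ⟨s, ⟨k, rfl⟩, hx⟩
        have hek : ee k g = 0 := by
          have := hterm k
          have hp : (0:ℝ) < (1/2 : ℝ)^k := by positivity
          exact (mul_eq_zero.1 this).resolve_left (ne_of_gt hp)
        have hmin : min 1 (dist (CLAux.toF g x) (f₀ x)) ≤ 0 := by
          rw [← hek]
          exact CLAux.le_supd zero_le_one hx
        have hd : dist (CLAux.toF g x) (f₀ x) ≤ 0 := by
          rcases le_or_gt (dist (CLAux.toF g x) (f₀ x)) 0 with h' | h'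
          · exact h'
          · exfalso
            have : (0:ℝ) < min 1 (dist (CLAux.toF g x) (f₀ x)) := lt_min one_pos h'
            linarith
        rw [← dist_le_zero]
        exact hd
      exact hnoext ⟨CLAux.toF g, (show C(X,Y) from g).continuous, hagree⟩
    set Φ : CL X Y L → ℝ := fun g => (Ψ g)⁻¹ with hΦ
    have hΦcont : Continuous Φ := hΨcont.inv₀ (fun g => ne_of_gt (hΨpos g))
    obtain ⟨M, hM⟩ := hA Φ hΦcont
    set M' : ℝ := max M 1 with hM'
    have hM'pos : 0 < M' := lt_of_lt_of_le one_pos (le_max_right _ _)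
    have hMcl : ∀ g ∈ closure A, |Φ g| ≤ M' := by
      have hcl : IsClosed {g : CL X Y L | |Φ g| ≤ M'} :=
        isClosed_le (continuous_abs.comp hΦcont) continuous_const
      intro g hg
      exact closure_minimal (fun a ha => le_trans (hM a ha) (le_max_left _ _)) hcl hg
    -- cumulative unions
    set Cn : ℕ → Set X := fun n => Nat.rec (Bs 0) (fun k ih => ih ∪ Bs (k+1)) n with hCn
    have hCnL : ∀ n, Cn n ∈ L := by
      intro n
      induction n with
      | zero => exact hBs 0
      | succ k ih => exact hLunion _ ih _ (hBs (k+1))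
    have hCnsub : ∀ k n, k ≤ n → Bs k ⊆ Cn n := by
      intro k n hkn
      induction n with
      | zero =>
        have : k = 0 := Nat.le_zero.1 hkn
        subst this
        exact subset_rfl
      | succ m ih =>
        rcases eq_or_lt_of_le hkn with rfl | h
        · exact subset_union_right
        · exact (ih (Nat.lt_succ_iff.1 h)).trans subset_union_left
    obtain ⟨n, hn⟩ := exists_pow_lt_of_lt_one
      (show (0:ℝ) < 1/(3*M') by positivity) (show (1/2:ℝ) < 1 by norm_num)
    obtain ⟨Mset, hMF, hMcl2, hMest⟩ := hkey (Cn n) (hCnL n) ((1/2)^n) (by positivity)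
    have hnonempty : Mset.Nonempty := by
      haveI := hFl.1
      exact Filter.nonempty_of_mem hMF
    obtain ⟨g, hg⟩ := hnonempty
    have heeg : ∀ k ≤ n, ee k g ≤ (1/2 : ℝ)^n := by
      intro k hk
      apply CLAux.supd_le_of_forall_dist (by positivity)
      intro x hx
      exact hMest g hg x (hCnsub k n hk hx)
    have hΨg : Ψ g ≤ 3 * (1/2 : ℝ)^n := by
      have hsum := (Summable.sum_add_tsum_nat_add (f := fun k => (1/2:ℝ)^k * ee k g)
        (n+1) (hsummable g))
      have h1 : ∑ k ∈ Finset.range (n+1), (1/2:ℝ)^k * ee k g ≤ 2 * (1/2)^n := by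
        calc ∑ k ∈ Finset.range (n+1), (1/2:ℝ)^k * ee k g
            ≤ ∑ k ∈ Finset.range (n+1), (1/2:ℝ)^k * (1/2)^n := by
              apply Finset.sum_le_sum
              intro k hk
              exact mul_le_mul_of_nonneg_left
                (heeg k (Nat.lt_succ_iff.1 (Finset.mem_range.1 hk))) (by positivity)
          _ = (∑ k ∈ Finset.range (n+1), (1/2:ℝ)^k) * (1/2)^n := by
              rw [Finset.sum_mul]
          _ ≤ 2 * (1/2)^n := by
              apply mul_le_mul_of_nonneg_right _ (by positivity)
              have h2 := Summable.sum_le_tsum (Finset.range (n+1))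
                (fun k _ => by positivity : ∀ k ∉ Finset.range (n+1), (0:ℝ) ≤ (1/2)^k) hgeom
              have h3 : ∑' k : ℕ, (1/2 : ℝ)^k = 2 := by
                rw [tsum_geometric_of_lt_one (by norm_num) (by norm_num)]
                norm_num
              rwa [h3] at h2
      have htail : ∑' k : ℕ, (1/2:ℝ)^(k+(n+1)) * ee (k+(n+1)) g ≤ (1/2 : ℝ)^n := by
        have hs1 : Summable (fun k => (1/2:ℝ)^(k+(n+1)) * ee (k+(n+1)) g) :=
          (summable_nat_add_iff (n+1)).2 (hsummable g)
        have hs2 : Summable (fun k : ℕ => (1/2:ℝ)^(k+(n+1))) :=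
          (summable_nat_add_iff (n+1)).2 hgeom
        calc ∑' k : ℕ, (1/2:ℝ)^(k+(n+1)) * ee (k+(n+1)) g
            ≤ ∑' k : ℕ, (1/2:ℝ)^(k+(n+1)) := by
              apply Summable.tsum_le_tsum _ hs1 hs2
              intro k
              calc (1/2:ℝ)^(k+(n+1)) * ee (k+(n+1)) g
                  ≤ (1/2:ℝ)^(k+(n+1)) * 1 :=
                    mul_le_mul_of_nonneg_left (heele1 _ g) (by positivity)
                _ = (1/2:ℝ)^(k+(n+1)) := mul_one _
          _ = (∑' k : ℕ, (1/2:ℝ)^k) * (1/2)^(n+1) := by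
              rw [← tsum_mul_right]
              congr 1
              ext k
              rw [pow_add]
          _ = 2 * (1/2)^(n+1) := by
              rw [tsum_geometric_of_lt_one (by norm_num) (by norm_num)]
              norm_num
          _ ≤ (1/2)^n := by
              rw [pow_succ]
              ring_nf
              exact le_rfl
      have : Ψ g = ∑ k ∈ Finset.range (n+1), (1/2:ℝ)^k * ee k g
          + ∑' k : ℕ, (1/2:ℝ)^(k+(n+1)) * ee (k+(n+1)) g := hsum.symm
      rw [this]
      linarith
    have hΨlt : Ψ g < 1/M' := by
      have : 3 * (1/2:ℝ)^n < 3 * (1/(3*M')) := by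
        apply mul_lt_mul_of_pos_left hn (by norm_num)
      have h4 : 3 * (1/(3*M')) = 1/M' := by
        field_simp
      linarith
    have hfin : M' < (Ψ g)⁻¹ := by
      rw [← one_div, lt_div_iff₀ (hΨpos g)]
      rw [lt_div_iff₀ hM'pos] at hΨlt
      nlinarith [hM'pos, hΨpos g]
    have hcontr := hMcl g (hMcl2 hg)
    have : |Φ g| = (Ψ g)⁻¹ := abs_of_pos (inv_pos.2 (hΨpos g))
    rw [this] at hcontr
    linarith
  -- the limit as an element of CL
  set fC : CL X Y L := (⟨f₀, hf₀cont⟩ : C(X,Y)) with hfC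
  have hconv : Fl ≤ 𝓝 fC := by
    intro s hs
    rw [UniformSpace.mem_nhds_iff] at hs
    obtain ⟨V, hV, hVs⟩ := hs
    obtain ⟨B, hB, δ, hδ, hsubV⟩ := CLAux.exists_ent_subset hLne hdir hV
    obtain ⟨Mset, hMF, -, hMest⟩ := hkey B hB (δ/2) (by positivity)
    apply Filter.mem_of_superset hMF
    intro g hg
    have hent : (fC, g) ∈ CLAux.ent L B δ := by
      intro x hx
      have h1 : dist (CLAux.toF g x) (f₀ x) ≤ δ/2 := hMest g hg x hx
      have h2 : CLAux.toF fC x = f₀ x := rfl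
      rw [h2, dist_comm]
      linarith
    exact hVs (hsubV hent)
  refine ⟨fC, ?_, hconv⟩
  have hne : (𝓝 fC ⊓ 𝓟 (closure A)).NeBot := by
    haveI := hFl.1
    exact Filter.neBot_of_le (le_inf hconv hFle)
  have h9 : fC ∈ closure (closure A) := mem_closure_iff_clusterPt.2 hne
  rwa [closure_closure] at h9
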